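/- Let m ≥ 2, n ∈ ℕ, and for β ∈ {−n+1,...,n} and ε ∈ {1,...,m−1} define the Lagrange basis polynomial L_β(t) = ∏_{γ=−n+1, γ≠β}^{n} (t−γ)/(β−γ). Then L_β(ε/m) = (−1)^{β+n} / [(2n−1)!·(ε/m − β)] · C(2n−1, n−β) · (−n+1−ε/m)_{2n}, where (x)_{2n} = x(x+1)⋯(x+2n−1) is the Pochhammer symbol and C denotes the binomial coefficient. -/

import Mathlib

lemma prodIccInt (f : ℤ → ℚ) (a b : ℤ) :
    ∏ γ ∈ Finset.Icc a b, f γ = ∏ i ∈ Finset.range (b + 1 - a).toNat, f (a + i) := by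
  rw [Int.Icc_eq_finset_map, Finset.prod_map]
  simp [Function.Embedding.trans_apply, Nat.castEmbedding_apply, addLeftEmbedding_apply]

lemma prodDesc (j : ℕ) : ∏ i ∈ Finset.range j, ((j : ℚ) - i) = j.factorial := by
  rw [← Finset.prod_range_reflect, ← Finset.prod_range_add_one_eq_factorial, Nat.cast_prod]
  refine Finset.prod_congr rfl fun i hi => ?_
  rw [Finset.mem_range] at hi
  have h1 : j - 1 - i = j - (i + 1) := by omega
  rw [h1, Nat.cast_sub (by omega)]
  push_cast
  ring

/-- Closed formula for the Lagrange basis polynomial on nodes {−n+1,…,n}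
evaluated at ε/m, giving the Dubuc–Deslauriers mask coefficients. -/
theorem stmt13 (m n : ℕ) (hm : 2 ≤ m) (hn : 1 ≤ n)
    (β : ℤ) (hβ₁ : -(n : ℤ) + 1 ≤ β) (hβ₂ : β ≤ n)
    (ε : ℕ) (hε₁ : 1 ≤ ε) (hε₂ : ε ≤ m - 1) :
    (∏ γ ∈ (Finset.Icc (-(n : ℤ) + 1) (n : ℤ)).erase β,
        (((ε : ℚ) / m - γ) / ((β : ℚ) - γ))) =
      (-1 : ℚ) ^ (β + n) / (((2 * n - 1).factorial : ℚ) * ((ε : ℚ) / m - β)) *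
        (((2 * n - 1).choose ((n : ℤ) - β).toNat : ℚ)) *
        ∏ i ∈ Finset.range (2 * n), (-(n : ℚ) + 1 - (ε : ℚ) / m + i) := by
  set x : ℚ := (ε : ℚ) / m with hxdef
  set k : ℕ := ((n : ℤ) - β).toNat with hkdef
  set j : ℕ := (β + (n : ℤ) - 1).toNat with hjdef
  have hkj : k + j = 2 * n - 1 := by omega
  have hkn : k ≤ 2 * n - 1 := by omega
  -- x is strictly between 0 and 1
  have hm0 : (0 : ℚ) < m := by
    have : (0:ℕ) < m := by omega
    exact_mod_cast this
  have hx0 : 0 < x := by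
    apply div_pos _ hm0
    have : (0:ℕ) < ε := hε₁
    exact_mod_cast this
  have hx1 : x < 1 := by
    rw [hxdef, div_lt_one hm0]
    have : ε < m := by omega
    exact_mod_cast this
  have hxβ : x - (β : ℚ) ≠ 0 := by
    rcases le_or_gt β 0 with h | h
    · have : (β : ℚ) ≤ 0 := by exact_mod_cast h
      exact sub_ne_zero.mpr (ne_of_gt (lt_of_le_of_lt this hx0))
    · have : (1 : ℚ) ≤ (β : ℚ) := by exact_mod_cast h
      exact sub_ne_zero.mpr (ne_of_lt (lt_of_lt_of_le hx1 this))
  have hβS : β ∈ Finset.Icc (-(n : ℤ) + 1) (n : ℤ) := Finset.mem_Icc.mpr ⟨hβ₁, hβ₂⟩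
  -- the full numerator product
  have hP : ∏ γ ∈ Finset.Icc (-(n : ℤ) + 1) (n : ℤ), (x - (γ : ℚ)) =
      ∏ i ∈ Finset.range (2 * n), (-(n : ℚ) + 1 - x + i) := by
    rw [prodIccInt (fun γ => x - (γ : ℚ)) (-(n : ℤ) + 1) (n : ℤ)]
    have h2n : ((n : ℤ) + 1 - (-(n : ℤ) + 1)).toNat = 2 * n := by omega
    rw [h2n]
    have : ∀ i ∈ Finset.range (2 * n),
        (-(n : ℚ) + 1 - x + i) = -1 * (x - ((-(n : ℤ) + 1 + (i : ℤ) : ℤ) : ℚ)) := by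
      intro i _; push_cast; ring
    rw [Finset.prod_congr rfl this, Finset.prod_mul_distrib, Finset.prod_const,
      Finset.card_range]
    have : (-1 : ℚ) ^ (2 * n) = 1 := Even.neg_one_pow ⟨n, by ring⟩
    rw [this, one_mul]
  -- numerator over erased set
  have hNum : (x - (β : ℚ)) * ∏ γ ∈ (Finset.Icc (-(n : ℤ) + 1) (n : ℤ)).erase β,
      (x - (γ : ℚ)) = ∏ i ∈ Finset.range (2 * n), (-(n : ℚ) + 1 - x + i) := by
    rw [← hP]
    exact Finset.mul_prod_erase _ (fun γ : ℤ => x - (γ : ℚ)) hβS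
  -- denominator split
  have hsplit : (Finset.Icc (-(n : ℤ) + 1) (n : ℤ)).erase β =
      Finset.Icc (-(n : ℤ) + 1) (β - 1) ∪ Finset.Icc (β + 1) (n : ℤ) := by
    ext γ
    simp only [Finset.mem_erase, Finset.mem_Icc, Finset.mem_union]
    omega
  have hdisj : Disjoint (Finset.Icc (-(n : ℤ) + 1) (β - 1)) (Finset.Icc (β + 1) (n : ℤ)) := by
    rw [Finset.disjoint_left]
    intro γ h1 h2
    rw [Finset.mem_Icc] at h1 h2
    omega
  have hD1 : ∏ γ ∈ Finset.Icc (-(n : ℤ) + 1) (β - 1), ((β : ℚ) - γ) = j.factorial := by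
    rw [prodIccInt (fun γ => (β : ℚ) - γ)]
    have hj' : (β - 1 + 1 - (-(n : ℤ) + 1)).toNat = j := by omega
    rw [hj', ← prodDesc j]
    refine Finset.prod_congr rfl fun i _ => ?_
    have hcast : ((j : ℤ) : ℚ) = (β : ℚ) - (-(n : ℚ) + 1) := by
      have : (j : ℤ) = β - (-(n : ℤ) + 1) := by omega
      rw [this]; push_cast; ring
    push_cast at hcast ⊢
    rw [hcast]; ring
  have hD2 : ∏ γ ∈ Finset.Icc (β + 1) (n : ℤ), ((β : ℚ) - γ) =
      (-1 : ℚ) ^ k * k.factorial := by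
    rw [prodIccInt (fun γ => (β : ℚ) - γ)]
    have hk' : ((n : ℤ) + 1 - (β + 1)).toNat = k := by omega
    rw [hk']
    have : ∀ i ∈ Finset.range k, ((β : ℚ) - ((β + 1 + (i : ℤ) : ℤ) : ℚ)) =
        -1 * ((i : ℚ) + 1) := by
      intro i _; push_cast; ring
    rw [Finset.prod_congr rfl this, Finset.prod_mul_distrib, Finset.prod_const,
      Finset.card_range]
    congr 1
    exact_mod_cast congrArg (Nat.cast : ℕ → ℚ) (Finset.prod_range_add_one_eq_factorial k)
  have hD : ∏ γ ∈ (Finset.Icc (-(n : ℤ) + 1) (n : ℤ)).erase β, ((β : ℚ) - γ) =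
      j.factorial * ((-1 : ℚ) ^ k * k.factorial) := by
    rw [hsplit, Finset.prod_union hdisj, hD1, hD2]
  -- choose identity
  have hchoose : ((2 * n - 1).choose k : ℚ) * k.factorial * j.factorial =
      (2 * n - 1).factorial := by
    have := Nat.choose_mul_factorial_mul_factorial hkn
    have hj2 : 2 * n - 1 - k = j := by omega
    rw [hj2] at this
    exact_mod_cast this
  -- sign identity
  have hsign : (-1 : ℚ) ^ (β + (n : ℤ)) = (-1 : ℚ) ^ k := by
    have h1 : β + (n : ℤ) = ((β + (n : ℤ)).toNat : ℤ) := by omega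
    rw [h1, zpow_natCast]
    have h2 : (β + (n : ℤ)).toNat % 2 = k % 2 := by omega
    rw [neg_one_pow_eq_pow_mod_two, h2, ← neg_one_pow_eq_pow_mod_two]
  -- assemble
  set E := ∏ γ ∈ (Finset.Icc (-(n : ℤ) + 1) (n : ℤ)).erase β, (x - (γ : ℚ)) with hEdef
  rw [Finset.prod_div_distrib, hD, hsign, ← hNum, ← hchoose]
  have hk0 : (k.factorial : ℚ) ≠ 0 := by exact_mod_cast k.factorial_ne_zero
  have hj0 : (j.factorial : ℚ) ≠ 0 := by exact_mod_cast j.factorial_ne_zero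
  have hc0 : ((2 * n - 1).choose k : ℚ) ≠ 0 := by
    exact_mod_cast (Nat.choose_pos hkn).ne'
  have hs0 : (-1 : ℚ) ^ k ≠ 0 := by positivity
  have hsq : (-1 : ℚ) ^ k * (-1 : ℚ) ^ k = 1 := by
    rw [← pow_add]
    exact Even.neg_one_pow ⟨k, by ring⟩
  have h2k : (-1 : ℚ) ^ (k * 2) = 1 := Even.neg_one_pow ⟨k, by ring⟩
  field_simp
  linear_combination (-1 * (∏ γ ∈ (Finset.Icc (-(n : ℤ) + 1) (n : ℤ)).erase β, (x - (γ : ℚ)))) * h2k
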